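/- For odd n ≥ 5, the digraph V_n (vertices 1,…,n with edges (i,i+1) for 1 ≤ i ≤ n-1, plus (n,1) and (n,3)) is primitive and its exponent equals n² - 3n + 4. -/

import Mathlib

/-- `PathLen E t u v` : there is a directed path of length exactly `t` from `u` to `v`. -/
def PathLen {V : Type*} (E : V → V → Prop) : ℕ → V → V → Prop
  | 0, u, v => u = v
  | t+1, u, v => ∃ x, E u x ∧ PathLen E t x v

/-- The digraph `V_n` on vertices `0,…,n-1` (paper's `1,…,n` shifted by one):
edges `i → i+1` for `i < n-1`, plus `n-1 → 0` and `n-1 → 2`. -/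
def vEdge (n : ℕ) (u v : ZMod n) : Prop :=
  v = u + 1 ∨ (u.val = n - 1 ∧ v = 2)


lemma pathLen_trans {V : Type*} {E : V → V → Prop} {s t : ℕ} {u w v : V}
    (h1 : PathLen E s u w) (h2 : PathLen E t w v) : PathLen E (s+t) u v := by
  induction s generalizing u with
  | zero => rw [Nat.zero_add]; exact h1 ▸ h2
  | succ s ih =>
    obtain ⟨x, hx, hp⟩ := h1
    rw [Nat.succ_add]
    exact ⟨x, hx, ih hp⟩

lemma step_path (n : ℕ) (k : ℕ) (u : ZMod n) : PathLen (vEdge n) k u (u + (k : ZMod n)) := by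
  induction k generalizing u with
  | zero => show u = u + ((0:ℕ):ZMod n); simp
  | succ k ih =>
    refine ⟨u + 1, Or.inl rfl, ?_⟩
    have h : u + ((k:ℕ)+1 : ℕ) = (u+1) + (k : ZMod n) := by push_cast; ring
    rw [h]
    exact ih (u+1)

section
variable {n : ℕ} (hn : 5 ≤ n)
include hn

lemma two_val : ((2 : ZMod n)).val = 2 := by
  haveI : NeZero n := ⟨by omega⟩
  have : ((2:ℕ) : ZMod n).val = 2 % n := ZMod.val_natCast n 2
  simpa using this.trans (Nat.mod_eq_of_lt (by omega))

lemma nm1_val : (((n-1 : ℕ) : ZMod n)).val = n - 1 := by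
  haveI : NeZero n := ⟨by omega⟩
  rw [ZMod.val_natCast]
  exact Nat.mod_eq_of_lt (by omega)

/-- the chord step -/
lemma chord_step : PathLen (vEdge n) 1 (((n-1:ℕ)) : ZMod n) 2 :=
  ⟨2, Or.inr ⟨nm1_val hn, rfl⟩, rfl⟩

/-- short loop at 2 of length n-2 -/
lemma short_loop : PathLen (vEdge n) (n-2) (2 : ZMod n) 2 := by
  have h1 : PathLen (vEdge n) (n-3) (2:ZMod n) (((n-1:ℕ)):ZMod n) := by
    have := step_path n (n-3) (2 : ZMod n)
    have h2 : (2 : ZMod n) + ((n-3 : ℕ) : ZMod n) = ((n-1:ℕ) : ZMod n) := by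
      have : ((n-1:ℕ) : ZMod n) = ((2 + (n-3) : ℕ) : ZMod n) := by congr 1; omega
      rw [this]; push_cast; ring
    rwa [h2] at this
  have := pathLen_trans h1 (chord_step hn)
  have he : n - 3 + 1 = n - 2 := by omega
  rwa [he] at this

omit hn in
/-- long loop at any vertex of length n -/
lemma long_loop (u : ZMod n) : PathLen (vEdge n) n u u := by
  have := step_path n n u
  rwa [ZMod.natCast_self, add_zero] at this

omit hn in
lemma loop_mul {ℓ : ℕ} {w : ZMod n} (h : PathLen (vEdge n) ℓ w w) (k : ℕ) :
    PathLen (vEdge n) (k * ℓ) w w := by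
  induction k with
  | zero => rw [Nat.zero_mul]; exact rfl
  | succ k ih =>
    have := pathLen_trans ih h
    rwa [show (k+1)*ℓ = k*ℓ + ℓ by ring]

/-- path from u to v of length (v-u).val along the cycle -/
lemma base_path (u v : ZMod n) : PathLen (vEdge n) ((v - u).val) u v := by
  haveI : NeZero n := ⟨by omega⟩
  have := step_path n ((v-u).val) u
  rwa [ZMod.natCast_val, ZMod.cast_id, add_sub_cancel] at this

end

/-- arithmetic decomposition for the upper bound -/
lemma exists_decomp {n : ℕ} (hn : 5 ≤ n) (hodd : Odd n) (c : ℕ)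
    (h1 : 1 ≤ c) (h2 : c ≤ 2*n-1) (hne : c ≠ n+2) :
    ∃ x a : ℕ, n^2 - 3*n + 4 = c + x*(n-2) + a*n := by
  obtain ⟨m, hm⟩ := hodd
  subst hm
  set n := 2*m+1 with hnn
  have hm2 : 2 ≤ m := by omega
  rcases Nat.even_or_odd c with ⟨s, hs⟩ | ⟨s, hs⟩
  · -- c even
    rcases eq_or_ne c 2 with rfl | hc2
    · refine ⟨n-1, 0, ?_⟩
      zify [show 1 ≤ n by omega, show 2 ≤ n by omega, show 3*n ≤ n^2 by nlinarith]
      ring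
    · -- c = 2s ≥ 4, x = s-2, a = n-3-(s-2)
      refine ⟨s-2, n-3-(s-2), ?_⟩
      have hs4 : 4 ≤ c := by omega
      have hsle : s - 2 ≤ n - 3 := by omega
      zify [show 2 ≤ s by omega, show 2 ≤ n by omega, show 3 ≤ n by omega,
        show s-2 ≤ n-3 from hsle, show 3*n ≤ n^2 by nlinarith]
      subst hs
      push_cast
      ring
  · -- c odd, c = 2s+1
    rcases le_or_gt c n with hcn | hcn
    · -- x = s + m - 1, a = m - s
      refine ⟨s + m - 1, m - s, ?_⟩
      have hsm : s ≤ m := by omega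
      zify [show 1 ≤ s + m by omega, show s ≤ m from hsm, show 2 ≤ n by omega,
        show 3*n ≤ n^2 by nlinarith]
      subst hs
      push_cast [hnn]
      ring
    · -- c odd, c ≥ n+4 (since c ≠ n+2 and parities), x = (c-n-4)/2 = s-m-2? c=2s+1, n=2m+1: c-n-4 = 2s-2m-4, x = s-m-2, a = n-4-x
      have hc4 : 2*m+1+4 ≤ c := by omega
      refine ⟨s - m - 2, n - 4 - (s-m-2), ?_⟩
      have hx : s - m - 2 ≤ n - 4 := by omega
      zify [show 2 ≤ n by omega, show 4 ≤ n by omega, show m ≤ s by omega, show 2 ≤ s - m by omega,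
        show s - m - 2 ≤ n - 4 from hx, show 3*n ≤ n^2 by nlinarith]
      subst hs
      push_cast [hnn]
      ring

lemma cast_exp4 {n : ℕ} (hn : 5 ≤ n) : ((n^2 - 3*n + 4 : ℕ) : ZMod n) = 4 := by
  have h3 : 3*n ≤ n^2 := by nlinarith
  rw [Nat.cast_add, Nat.cast_sub h3]
  push_cast
  simp [ZMod.natCast_self]

lemma mem_exp {n : ℕ} (hn : 5 ≤ n) (hodd : Odd n) (u v : ZMod n) :
    PathLen (vEdge n) (n^2 - 3*n + 4) u v := by
  haveI : NeZero n := ⟨by omega⟩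
  have hu : u.val < n := ZMod.val_lt u
  have hf : (v - 2).val < n := ZMod.val_lt _
  set d1 := n - 1 - u.val with hd1
  set f := (v - 2).val with hfv
  set c := d1 + 1 + f with hc
  have hcast_u : ((u.val : ℕ) : ZMod n) = u := by simp [ZMod.natCast_val, ZMod.cast_id]
  by_cases hcn : c = n + 2
  · -- use the pure cycle path
    have hvu : v - u = 4 := by
      have h1 : ((c : ℕ) : ZMod n) = 2 := by
        rw [hcn]; push_cast; simp [ZMod.natCast_self]
      have h2 : ((d1 : ℕ) : ZMod n) = -1 - u := by
        rw [hd1, Nat.cast_sub (by omega : u.val ≤ n - 1), Nat.cast_sub (by omega : 1 ≤ n)]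
        rw [hcast_u]
        simp [ZMod.natCast_self]
      have h3 : ((f : ℕ) : ZMod n) = v - 2 := by
        rw [hfv]; simp [ZMod.natCast_val, ZMod.cast_id]
      rw [hc] at h1
      push_cast at h1
      rw [h2, h3] at h1
      linear_combination h1
    have := step_path n (n^2 - 3*n + 4) u
    rwa [cast_exp4 hn, show u + 4 = v by rw [← hvu]; ring] at this
  · obtain ⟨x, a, ht⟩ := exists_decomp hn hodd c (by omega) (by omega) hcn
    have P1 : PathLen (vEdge n) d1 u (((n-1:ℕ)) : ZMod n) := by
      have := step_path n d1 u
      have he : u + ((d1 : ℕ) : ZMod n) = ((n-1:ℕ) : ZMod n) := by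
        rw [← hcast_u, ← Nat.cast_add]
        congr 1
        omega
      rwa [he] at this
    have P2 := chord_step hn
    have P3 := loop_mul (short_loop hn) x
    have P4 := loop_mul (long_loop (2 : ZMod n)) a
    have P5 : PathLen (vEdge n) f (2 : ZMod n) v := by
      have := step_path n f (2 : ZMod n)
      rwa [hfv, ZMod.natCast_val, ZMod.cast_id, add_sub_cancel] at this
    have := pathLen_trans (pathLen_trans (pathLen_trans (pathLen_trans P1 P2) P3) P4) P5
    have hlen : d1 + 1 + x*(n-2) + a*n + f = n^2 - 3*n + 4 := by
      rw [ht, hc]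
      set X := x*(n-2); set A := a*n
      omega
    rwa [hlen] at this

lemma walk_inv {n : ℕ} (hn : 5 ≤ n) : ∀ (t : ℕ) (u v : ZMod n), PathLen (vEdge n) t u v →
    ∃ b : ℕ, v = u + (t : ZMod n) + 2 * (b : ZMod n) ∧
      (b = 0 ∨ (n - 1 - u.val) + 1 + (v - 2).val + (b-1)*(n-2) ≤ t) := by
  haveI : NeZero n := ⟨by omega⟩
  intro t
  induction t with
  | zero =>
    intro u v h
    exact ⟨0, by rw [show u = v from h]; push_cast; ring, Or.inl rfl⟩
  | succ t ih =>
    intro u v h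
    obtain ⟨x, hx, hp⟩ := h
    obtain ⟨b, heq, hbd⟩ := ih x v hp
    have hu : u.val < n := ZMod.val_lt u
    rcases hx with hx1 | ⟨huval, hx2⟩
    · subst hx1
      refine ⟨b, by rw [heq]; push_cast; ring, ?_⟩
      rcases hbd with rfl | hbd
      · exact Or.inl rfl
      · refine Or.inr ?_
        have h1 : u + 1 = ((u.val + 1 : ℕ) : ZMod n) := by
          push_cast
          rw [ZMod.natCast_val, ZMod.cast_id]
        rcases lt_or_eq_of_le (show u.val + 1 ≤ n by omega) with hlt | hgt
        · have hxval : (u + 1).val = u.val + 1 := by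
            rw [h1, ZMod.val_natCast_of_lt hlt]
          rw [hxval] at hbd
          set P := (b-1)*(n-2)
          set Q := (v-2).val
          omega
        · have hxval : (u + 1).val = 0 := by
            rw [h1, hgt, ZMod.natCast_self, ZMod.val_zero]
          rw [hxval] at hbd
          set P := (b-1)*(n-2)
          set Q := (v-2).val
          omega
    · subst hx2
      have hu2 : u = -1 := by
        have : u = ((u.val : ℕ) : ZMod n) := by simp [ZMod.natCast_val, ZMod.cast_id]
        rw [this, huval, Nat.cast_sub (by omega : 1 ≤ n)]
        simp [ZMod.natCast_self]
      refine ⟨b + 1, ?_, Or.inr ?_⟩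
      · rw [heq, hu2]; push_cast; ring
      · rw [huval, show n - 1 - (n-1) = 0 by omega]
        rcases b with _ | B
        · -- b = 0 : v = 2 + t
          have hv2 : (v - 2).val ≤ t := by
            have : v - 2 = ((t : ℕ) : ZMod n) := by rw [heq]; push_cast; ring
            rw [this, ZMod.val_natCast]
            exact (Nat.mod_le t n).trans (le_refl t)
          set Q := (v-2).val
          simp only [Nat.add_sub_cancel]
          omega
        · rcases hbd with hB0 | hbd
          · omega
          · rw [two_val hn] at hbd
            rw [Nat.add_sub_cancel] at hbd
            rw [Nat.add_sub_cancel, Nat.succ_mul]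
            set P := B*(n-2)
            set Q := (v-2).val
            omega

lemma cast_exp3 {n : ℕ} (hn : 5 ≤ n) : ((n^2 - 3*n + 3 : ℕ) : ZMod n) = 3 := by
  have h3 : 3*n ≤ n^2 := by nlinarith
  rw [Nat.cast_add, Nat.cast_sub h3]
  push_cast
  simp [ZMod.natCast_self]

/-- For odd `n ≥ 5`, the digraph `V_n` is primitive (strongly connected and the gcd
of its directed cycle lengths is 1) and its exponent is exactly `n² - 3n + 4`. -/
theorem stmt_15 (n : ℕ) (hodd : Odd n) (hn : 5 ≤ n) :
    ((∀ u v : ZMod n, ∃ t, PathLen (vEdge n) t u v) ∧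
      (∀ d : ℕ, (∀ (t : ℕ) (v : ZMod n), 0 < t → PathLen (vEdge n) t v v → d ∣ t) →
        d = 1)) ∧
    IsLeast {t : ℕ | ∀ u v : ZMod n, PathLen (vEdge n) t u v} (n ^ 2 - 3 * n + 4) := by

  haveI : NeZero n := ⟨by omega⟩
  refine ⟨⟨fun u v => ⟨(v - u).val, base_path hn u v⟩, fun d hd => ?_⟩, fun u v => mem_exp hn hodd u v, fun s hs => ?_⟩
  · -- gcd = 1
    have h1 : d ∣ n := hd n 0 (by omega) (long_loop 0)
    have h2 : d ∣ (n-2) := hd (n-2) 2 (by omega) (short_loop hn)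
    have h3 : d ∣ 2 := by
      have := Nat.dvd_sub h1 h2
      rwa [show n - (n-2) = 2 by omega] at this
    rcases (Nat.dvd_prime Nat.prime_two).mp h3 with rfl | rfl
    · rfl
    · exfalso
      obtain ⟨m, hm⟩ := hodd
      obtain ⟨k, hk⟩ := h1
      omega
  · -- lower bound
    by_contra hlt
    push_neg at hlt
    have hN : 3*n + 3 ≤ n^2 := by nlinarith
    -- upward closure
    have hup : ∀ k (u v : ZMod n), PathLen (vEdge n) (s + k) u v := by
      intro k
      induction k with
      | zero => exact hs
      | succ k ih => exact fun u v => ⟨u + 1, Or.inl rfl, ih (u + 1) v⟩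
    have hpath : PathLen (vEdge n) (n^2 - 3*n + 3) 0 1 := by
      have := hup (n^2 - 3*n + 3 - s) 0 1
      rwa [show s + (n^2 - 3*n + 3 - s) = n^2 - 3*n+3 by
        have : s + 1 ≤ n^2 - 3*n + 4 := hlt
        omega] at this
    obtain ⟨b, heq, hbd⟩ := walk_inv hn _ 0 1 hpath
    rw [cast_exp3 hn, zero_add] at heq
    have h0 : ((2*(b+1) : ℕ) : ZMod n) = 0 := by
      push_cast
      linear_combination -heq
    have hdvd : n ∣ 2*(b+1) := (ZMod.natCast_eq_zero_iff _ _).mp h0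
    have hcop : Nat.Coprime n 2 := by
      exact hodd.coprime_two_right
    have hdvd2 : n ∣ b + 1 := hcop.dvd_of_dvd_mul_left hdvd
    have hble : n ≤ b + 1 := Nat.le_of_dvd (by omega) hdvd2
    rcases hbd with rfl | hbd
    · omega
    · have hv0 : (0 : ZMod n).val = 0 := ZMod.val_zero
      have hv1 : ((1 : ZMod n) - 2).val = n - 1 := by
        have h12 : (1 : ZMod n) - 2 = ((n - 1 : ℕ) : ZMod n) := by
          rw [Nat.cast_sub (by omega : 1 ≤ n)]
          simp [ZMod.natCast_self]
          ring
        rw [h12, nm1_val hn]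
      rw [hv0, hv1, Nat.sub_zero] at hbd
      have hmul : (n-2)*(n-2) ≤ (b-1)*(n-2) :=
        Nat.mul_le_mul_right _ (by omega)
      have key : (n - 1) + 1 + (n - 1) + (n-2)*(n-2) ≤ n^2 - 3*n + 3 :=
        le_trans (by omega) hbd
      zify [show 1 ≤ n by omega, show 2 ≤ n by omega, show 3*n ≤ n^2 by nlinarith] at key
      nlinarith
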